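/- Let d = (d_1,…,d_n) be a list of nonnegative integers in nonincreasing order whose sum is even, and let m(d) = max{i : d_i ≥ i−1}. Then d is the degree sequence of a simple graph if and only if for every k ∈ {1,…,m(d)} one has Σ_{i=1}^k d_i ≤ k(k−1) + Σ_{i=k+1}^n min{k, d_i}. -/

import Mathlib

open Finset
open scoped Classical

/-- The degree of a vertex: the number of its neighbors. -/
noncomputable def deg {V : Type*} (G : SimpleGraph V) (v : V) : ℕ :=
  (G.neighborSet v).ncard

lemma deg_eq_of_iff {n : ℕ} (G : SimpleGraph (Fin n)) (v : Fin n) (X : Finset (Fin n))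
    (h : ∀ b, G.Adj v b ↔ b ∈ X) : deg G v = X.card := by
  have hset : G.neighborSet v = ↑X := Set.ext (fun b => by simpa using h b)
  rw [deg, hset, Set.ncard_coe_finset]

lemma deg_eq_card {n : ℕ} (G : SimpleGraph (Fin n)) (v : Fin n) :
    deg G v = (univ.filter (G.Adj v)).card :=
  deg_eq_of_iff G v _ (fun b => by simp)

lemma card_filter_le_eq (n k : ℕ) (h : k < n) :
    (univ.filter fun i : Fin n => (i : ℕ) ≤ k).card = k + 1 := by
  rw [← Finset.card_range (k+1)]
  apply Finset.card_bij (fun (i : Fin n) _ => (i : ℕ))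
  · intro a ha; simp only [mem_filter] at ha; simp only [Finset.mem_range]; omega
  · intro a _ b _ hab; exact Fin.val_injective hab
  · intro b hb
    simp only [Finset.mem_range] at hb
    exact ⟨⟨b, by omega⟩, by simp; omega, rfl⟩

lemma card_filter_Ioc_eq (n k m : ℕ) (h : m < n) :
    (univ.filter fun i : Fin n => k < (i : ℕ) ∧ (i : ℕ) ≤ m).card = m - k := by
  rw [← Nat.card_Ioc k m]
  apply Finset.card_bij (fun (i : Fin n) _ => (i : ℕ))
  · intro a ha; simp only [mem_filter] at ha; simp only [Finset.mem_Ioc]; omega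
  · intro a _ b _ hab; exact Fin.val_injective hab
  · intro b hb
    simp only [Finset.mem_Ioc] at hb
    exact ⟨⟨b, by omega⟩, by simp; omega, rfl⟩

lemma sum_split_le {n : ℕ} (f : Fin n → ℕ) (a b : ℕ) (hab : a ≤ b) :
    ∑ i ∈ univ.filter (fun i : Fin n => (i : ℕ) ≤ b), f i =
      ∑ i ∈ univ.filter (fun i : Fin n => (i : ℕ) ≤ a), f i +
      ∑ i ∈ univ.filter (fun i : Fin n => a < (i : ℕ) ∧ (i : ℕ) ≤ b), f i := by
  rw [← Finset.sum_filter_add_sum_filter_not (univ.filter (fun i : Fin n => (i : ℕ) ≤ b))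
    (fun i => (i : ℕ) ≤ a) f]
  have h1 : (univ.filter (fun i : Fin n => (i : ℕ) ≤ b)).filter (fun i : Fin n => (i : ℕ) ≤ a) =
      univ.filter (fun i : Fin n => (i : ℕ) ≤ a) := by
    ext i; simp only [mem_filter, mem_univ, true_and]
    all_goals omega
  have h2 : (univ.filter (fun i : Fin n => (i : ℕ) ≤ b)).filter (fun i : Fin n => ¬ (i : ℕ) ≤ a) =
      univ.filter (fun i : Fin n => a < (i : ℕ) ∧ (i : ℕ) ≤ b) := by
    ext i; simp only [mem_filter, mem_univ, true_and]
    all_goals omega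
  rw [h1, h2]

lemma sum_split_gt {n : ℕ} (f : Fin n → ℕ) (a b : ℕ) (hab : a ≤ b) :
    ∑ i ∈ univ.filter (fun i : Fin n => a < (i : ℕ)), f i =
      ∑ i ∈ univ.filter (fun i : Fin n => a < (i : ℕ) ∧ (i : ℕ) ≤ b), f i +
      ∑ i ∈ univ.filter (fun i : Fin n => b < (i : ℕ)), f i := by
  rw [← Finset.sum_filter_add_sum_filter_not (univ.filter (fun i : Fin n => a < (i : ℕ)))
    (fun i => (i : ℕ) ≤ b) f]
  have h1 : (univ.filter (fun i : Fin n => a < (i : ℕ))).filter (fun i : Fin n => (i : ℕ) ≤ b) =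
      univ.filter (fun i : Fin n => a < (i : ℕ) ∧ (i : ℕ) ≤ b) := by
    ext i; simp only [mem_filter, mem_univ, true_and]
    all_goals omega
  have h2 : (univ.filter (fun i : Fin n => a < (i : ℕ))).filter (fun i : Fin n => ¬ (i : ℕ) ≤ b) =
      univ.filter (fun i : Fin n => b < (i : ℕ)) := by
    ext i; simp only [mem_filter, mem_univ, true_and]
    all_goals omega
  rw [h1, h2]

lemma filter_le_zero_eq {n : ℕ} (hn : 0 < n) :
    (univ.filter fun i : Fin n => (i : ℕ) ≤ 0) = {⟨0, hn⟩} := by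
  ext i; simp [Fin.ext_iff]
  all_goals omega

lemma filter_eq_singleton {n : ℕ} (a : ℕ) (ha : a + 1 < n) :
    (univ.filter fun i : Fin n => a < (i : ℕ) ∧ (i : ℕ) ≤ a + 1) = {⟨a+1, ha⟩} := by
  ext i; simp [Fin.ext_iff]
  all_goals omega

noncomputable def egL {n : ℕ} (d : Fin n → ℕ) (k : ℕ) : ℕ :=
  ∑ i ∈ univ.filter (fun i : Fin n => (i : ℕ) ≤ k), d i

noncomputable def egR {n : ℕ} (d : Fin n → ℕ) (k : ℕ) : ℕ :=
  (k + 1) * k + ∑ i ∈ univ.filter (fun i : Fin n => k < (i : ℕ)), min (k + 1) (d i)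

lemma egL_succ {n : ℕ} (d : Fin n → ℕ) (a : ℕ) (ha : a + 1 < n) :
    egL d (a + 1) = egL d a + d ⟨a + 1, ha⟩ := by
  rw [egL, egL, sum_split_le d a (a+1) (by omega), filter_eq_singleton a ha,
    Finset.sum_singleton]

lemma egR_succ {n : ℕ} (d : Fin n → ℕ) (a : ℕ) (ha : a + 1 < n) :
    egR d a = (a+1)*a + min (a+1) (d ⟨a+1, ha⟩) +
      ∑ i ∈ univ.filter (fun i : Fin n => a + 1 < (i : ℕ)), min (a + 1) (d i) := by
  rw [egR, sum_split_gt (fun i => min (a+1) (d i)) a (a+1) (by omega),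
    filter_eq_singleton a ha, Finset.sum_singleton, add_assoc]

lemma his_extend {n : ℕ} (d : Fin n → ℕ)
    (h : ∀ k : Fin n, (k : ℕ) ≤ d k → egL d (k : ℕ) ≤ egR d (k : ℕ)) :
    ∀ k, k < n → egL d k ≤ egR d k := by
  intro k
  induction k using Nat.strong_induction_on with
  | _ k ih =>
    intro hk
    by_cases hc : k ≤ d ⟨k, hk⟩
    · exact h ⟨k, hk⟩ hc
    · push_neg at hc
      obtain ⟨a, rfl⟩ : ∃ a, k = a + 1 := ⟨k - 1, by omega⟩
      have IH := ih a (by omega) (by omega)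
      have hL := egL_succ d a hk
      have hR := egR_succ d a hk
      have hdkf : d ⟨a+1, hk⟩ ≤ a := by omega
      have hmin : min (a+1) (d ⟨a+1, hk⟩) = d ⟨a+1, hk⟩ := by omega
      have htail : ∑ i ∈ univ.filter (fun i : Fin n => a + 1 < (i : ℕ)), min (a + 1) (d i) ≤
          ∑ i ∈ univ.filter (fun i : Fin n => a + 1 < (i : ℕ)), min (a + 2) (d i) := by
        apply Finset.sum_le_sum
        intro i _
        exact min_le_min (by omega) le_rfl
      rw [hR, hmin] at IH
      rw [hL, egR]
      have h2 : a + 1 + 1 = a + 2 := by omega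
      rw [h2]
      have hmul : (a+2)*(a+1) = (a+1)*a + 2*(a+1) := by ring
      linarith [htail, IH, hmul, hdkf]

lemma forward {n : ℕ} (d : Fin n → ℕ) (G : SimpleGraph (Fin n))
    (hd : ∀ i, deg G i = d i) (k : ℕ) (hk : k < n) :
    ∑ i ∈ univ.filter (fun i : Fin n => (i : ℕ) ≤ k), d i ≤
      (k + 1) * k +
        ∑ i ∈ univ.filter (fun i : Fin n => k < (i : ℕ)), min (k + 1) (d i) := by
  set S := univ.filter (fun i : Fin n => (i : ℕ) ≤ k) with hS
  set Sc := univ.filter (fun i : Fin n => k < (i : ℕ)) with hSc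
  have hdeg : ∀ v, d v = ∑ j, if G.Adj v j then 1 else 0 := by
    intro v; rw [← hd v, deg_eq_card, Finset.card_filter]
  have hcompl : ∀ v : Fin n, (∑ j ∈ S, if G.Adj v j then 1 else 0) +
      (∑ j ∈ Sc, if G.Adj v j then 1 else 0) = d v := by
    intro v
    rw [hdeg v, ← Finset.sum_filter_add_sum_filter_not univ (fun j : Fin n => (j : ℕ) ≤ k)]
    congr 1
    apply Finset.sum_congr _ (fun _ _ => rfl)
    ext i; simp only [hSc, mem_filter, mem_univ, true_and]; omega
  have hcardS : S.card = k + 1 := card_filter_le_eq n k hk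
  have key : ∑ i ∈ S, d i =
      (∑ i ∈ S, ∑ j ∈ S, if G.Adj i j then 1 else 0) +
      (∑ i ∈ S, ∑ j ∈ Sc, if G.Adj i j then 1 else 0) := by
    rw [← Finset.sum_add_distrib]
    exact (Finset.sum_congr rfl (fun i _ => (hcompl i).symm))
  rw [key]
  gcongr with a
  · -- inner part ≤ (k+1) * k
    calc ∑ i ∈ S, ∑ j ∈ S, (if G.Adj i j then 1 else 0)
        ≤ ∑ _i ∈ S, k := by
          apply Finset.sum_le_sum
          intro i hi
          rw [← Finset.card_filter]
          calc (S.filter (G.Adj i)).card ≤ (S.erase i).card := by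
                apply Finset.card_le_card
                intro j hj
                simp only [mem_filter] at hj
                exact Finset.mem_erase.mpr ⟨fun h => G.loopless.irrefl i (h ▸ hj.2), hj.1⟩
            _ ≤ k := by rw [Finset.card_erase_of_mem hi, hcardS]; omega
      _ = (k+1) * k := by rw [Finset.sum_const, hcardS, smul_eq_mul]
  · -- crossing part
    calc ∑ i ∈ S, ∑ j ∈ Sc, (if G.Adj i j then 1 else 0)
        = ∑ j ∈ Sc, ∑ i ∈ S, (if G.Adj j i then 1 else 0) := by
          rw [Finset.sum_comm]
          apply Finset.sum_congr rfl (fun j _ => Finset.sum_congr rfl (fun i _ => ?_))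
          congr 1
          simp [SimpleGraph.adj_comm]
      _ ≤ ∑ j ∈ Sc, min (k+1) (d j) := by
          apply Finset.sum_le_sum
          intro j _
          rw [← Finset.card_filter]
          apply le_min
          · calc (S.filter (G.Adj j)).card ≤ S.card := Finset.card_le_card (Finset.filter_subset _ _)
              _ = k + 1 := hcardS
          · rw [← hd j, deg_eq_card]
            apply Finset.card_le_card
            intro x hx
            simp only [mem_filter, mem_univ, true_and] at hx ⊢
            exact hx.2

lemma reduce_EG {n : ℕ} (d d' : Fin n → ℕ) (hmono : Antitone d)
    (heven : Even (∑ i, d i))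
    (hEG : ∀ k, k < n → egL d k ≤ egR d k)
    (s t : Fin n) (c : ℕ)
    (hst : (s : ℕ) < (t : ℕ))
    (hconst : ∀ i : Fin n, (i : ℕ) ≤ (s : ℕ) → d i = c)
    (hcmax : ∀ i : Fin n, d i ≤ c)
    (hpos : ∀ i : Fin n, (i : ℕ) ≤ (t : ℕ) → 1 ≤ d i)
    (hzero : ∀ i : Fin n, (t : ℕ) < (i : ℕ) → d i = 0)
    (hd' : ∀ i, d' i = if i = s ∨ i = t then d i - 1 else d i) :
    ∀ k, k < n → egL d' k ≤ egR d' k := by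
  have hsnet : s ≠ t := fun h => by rw [h] at hst; omega
  have hds : d s = c := hconst s le_rfl
  have hdt1 : 1 ≤ d t := hpos t le_rfl
  have hds1 : 1 ≤ d s := hpos s (by omega)
  have hc1 : 1 ≤ c := hds ▸ hds1
  -- pointwise facts
  have hptd : ∀ i : Fin n, d i = d' i + (if i = s ∨ i = t then 1 else 0) := by
    intro i
    rw [hd' i]
    by_cases h : i = s ∨ i = t
    · rw [if_pos h, if_pos h]
      rcases h with rfl | rfl <;> omega
    · rw [if_neg h, if_neg h]; omega
  have hptm : ∀ (K : ℕ) (i : Fin n),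
      min K (d i) ≤ min K (d' i) + (if i = s ∨ i = t then 1 else 0) := by
    intro K i
    rw [hd' i]
    by_cases h : i = s ∨ i = t
    · rw [if_pos h, if_pos h]; omega
    · rw [if_neg h, if_neg h]; omega
  have hind : ∀ (F : Finset (Fin n)), (∑ i ∈ F, if i = s ∨ i = t then (1:ℕ) else 0) =
      (if s ∈ F then 1 else 0) + (if t ∈ F then 1 else 0) := by
    intro F
    have hpt : ∀ i : Fin n, (if i = s ∨ i = t then (1:ℕ) else 0) =
        (if i = s then 1 else 0) + (if i = t then 1 else 0) := by
      intro i
      by_cases h1 : i = s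
      · subst h1
        rw [if_pos (Or.inl rfl), if_pos rfl, if_neg hsnet]
      · by_cases h2 : i = t
        · subst h2
          rw [if_pos (Or.inr rfl), if_neg h1, if_pos rfl]
        · rw [if_neg (by tauto), if_neg h1, if_neg h2]
    rw [Finset.sum_congr rfl (fun i _ => hpt i), Finset.sum_add_distrib,
      Finset.sum_ite_eq' F s (fun _ => (1:ℕ)), Finset.sum_ite_eq' F t (fun _ => (1:ℕ))]
  intro k hk
  by_cases hkt : (t : ℕ) ≤ k
  · -- Case 1
    have hL : egL d k = egL d' k + 2 := by
      rw [egL, egL, Finset.sum_congr rfl (fun i _ => hptd i), Finset.sum_add_distrib, hind]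
      have hs : s ∈ univ.filter (fun i : Fin n => (i : ℕ) ≤ k) := by
        simp only [mem_filter, mem_univ, true_and]; omega
      have ht : t ∈ univ.filter (fun i : Fin n => (i : ℕ) ≤ k) := by
        simp only [mem_filter, mem_univ, true_and]; omega
      rw [if_pos hs, if_pos ht]
    have hR : egR d k = egR d' k := by
      rw [egR, egR]
      congr 1
      apply Finset.sum_congr rfl
      intro i hi
      simp only [mem_filter, mem_univ, true_and] at hi
      rw [hd' i, if_neg]
      rintro (rfl | rfl) <;> omega
    have := hEG k hk
    omega
  · by_cases hks : (s : ℕ) ≤ k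
    · -- Case 2 : s ≤ k < t
      have hL : egL d k = egL d' k + 1 := by
        rw [egL, egL, Finset.sum_congr rfl (fun i _ => hptd i), Finset.sum_add_distrib, hind]
        have hs : s ∈ univ.filter (fun i : Fin n => (i : ℕ) ≤ k) := by
          simp only [mem_filter, mem_univ, true_and]; omega
        have ht : t ∉ univ.filter (fun i : Fin n => (i : ℕ) ≤ k) := by
          simp only [mem_filter, mem_univ, true_and]; omega
        rw [if_pos hs, if_neg ht]
      have hR : egR d k ≤ egR d' k + 1 := by
        rw [egR, egR, add_assoc]
        apply Nat.add_le_add_left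
        calc ∑ i ∈ univ.filter (fun i : Fin n => k < (i : ℕ)), min (k + 1) (d i)
            ≤ ∑ i ∈ univ.filter (fun i : Fin n => k < (i : ℕ)),
              (min (k + 1) (d' i) + if i = s ∨ i = t then 1 else 0) :=
              Finset.sum_le_sum (fun i _ => hptm (k+1) i)
          _ = (∑ i ∈ univ.filter (fun i : Fin n => k < (i : ℕ)), min (k + 1) (d' i)) + 1 := by
              rw [Finset.sum_add_distrib, hind]
              have hs : s ∉ univ.filter (fun i : Fin n => k < (i : ℕ)) := by
                simp only [mem_filter, mem_univ, true_and]; omega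
              have ht : t ∈ univ.filter (fun i : Fin n => k < (i : ℕ)) := by
                simp only [mem_filter, mem_univ, true_and]; omega
              rw [if_neg hs, if_pos ht]
      have := hEG k hk
      omega
    · -- Case 3 : k < s
      push_neg at hks hkt
      have hL0 : egL d k = egL d' k := by
        rw [egL, egL]
        apply Finset.sum_congr rfl
        intro i hi
        simp only [mem_filter, mem_univ, true_and] at hi
        rw [hd' i, if_neg]
        rintro (rfl | rfl) <;> omega
      have hLkc : egL d k = (k+1) * c := by
        rw [egL, Finset.sum_congr rfl (fun i hi => hconst i (by
          simp only [mem_filter, mem_univ, true_and] at hi; omega)),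
          Finset.sum_const, card_filter_le_eq n k hk, smul_eq_mul]
      by_cases hcK : c ≤ k + 1
      · -- Case 3b : both mins drop; use parity
        have hRd : egR d k = (k+1)*k + ∑ i ∈ univ.filter (fun i : Fin n => k < (i : ℕ)), d i := by
          rw [egR]
          congr 1
          exact Finset.sum_congr rfl (fun i _ => by have := hcmax i; omega)
        -- lower bound for the tail sum
        obtain ⟨a, ha⟩ : ∃ a, (s : ℕ) = k + (a + 1) := ⟨(s : ℕ) - k - 1, by omega⟩
        obtain ⟨b, hb⟩ : ∃ b, (t : ℕ) = (s : ℕ) + (b + 1) := ⟨(t : ℕ) - (s : ℕ) - 1, by omega⟩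
        have hsum1 : ∑ i ∈ univ.filter (fun i : Fin n => k < (i : ℕ) ∧ (i : ℕ) ≤ (s : ℕ)), d i
            = (a+1) * c := by
          rw [Finset.sum_congr rfl (fun i hi => hconst i (by
            simp only [mem_filter, mem_univ, true_and] at hi; omega)),
            Finset.sum_const, card_filter_Ioc_eq n k (s : ℕ) s.isLt, smul_eq_mul]
          congr 1
          omega
        have hsum2 : (b+1) ≤ ∑ i ∈ univ.filter
            (fun i : Fin n => (s : ℕ) < (i : ℕ) ∧ (i : ℕ) ≤ (t : ℕ)), d i := by
          have h1 := Finset.card_nsmul_le_sum (univ.filter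
            (fun i : Fin n => (s : ℕ) < (i : ℕ) ∧ (i : ℕ) ≤ (t : ℕ))) (fun i => d i) 1
            (fun i hi => hpos i (by
              simp only [mem_filter, mem_univ, true_and] at hi; omega))
          rw [card_filter_Ioc_eq n (s : ℕ) (t : ℕ) t.isLt] at h1
          simp only [smul_eq_mul] at h1
          omega
        have hsplit : ∑ i ∈ univ.filter (fun i : Fin n => k < (i : ℕ)), d i =
            (∑ i ∈ univ.filter (fun i : Fin n => k < (i : ℕ) ∧ (i : ℕ) ≤ (s : ℕ)), d i) +
            ((∑ i ∈ univ.filter (fun i : Fin n => (s : ℕ) < (i : ℕ) ∧ (i : ℕ) ≤ (t : ℕ)), d i) +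
             ∑ i ∈ univ.filter (fun i : Fin n => (t : ℕ) < (i : ℕ)), d i) := by
          rw [sum_split_gt d k (s : ℕ) (by omega), sum_split_gt d (s : ℕ) (t : ℕ) (by omega)]
        have hSS : (a+1) * c + (b+1) ≤ ∑ i ∈ univ.filter (fun i : Fin n => k < (i : ℕ)), d i := by
          rw [hsplit, hsum1]
          have := Nat.zero_le (∑ i ∈ univ.filter (fun i : Fin n => (t : ℕ) < (i : ℕ)), d i)
          omega
        have hgoal1 : egL d k + 1 ≤ egR d k := by
          rw [hLkc, hRd]
          have h1 : k * c ≤ k * (k+1) := Nat.mul_le_mul le_rfl hcK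
          have e1 : (k+1) * c = k * c + c := by ring
          have e2 : (k+1) * k = k * (k+1) := by ring
          have e3 : c ≤ (a+1) * c := Nat.le_mul_of_pos_left c (by omega)
          linarith [hSS]
        have hpartition : egL d k + ∑ i ∈ univ.filter (fun i : Fin n => k < (i : ℕ)), d i =
            ∑ i, d i := by
          rw [egL, ← Finset.sum_filter_add_sum_filter_not univ (fun i : Fin n => (i : ℕ) ≤ k) d]
          congr 1
          apply Finset.sum_congr _ (fun _ _ => rfl)
          ext i
          simp only [mem_filter, mem_univ, true_and]
          omega
        have hpar : Even (egR d k + egL d k) := by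
          have e : egR d k + egL d k = (k+1) * k +
              (egL d k + ∑ i ∈ univ.filter (fun i : Fin n => k < (i : ℕ)), d i) := by
            rw [hRd]; ring
          rw [e, hpartition]
          have he1 : Even ((k+1) * k) := by
            have := Nat.even_mul_succ_self k
            rwa [mul_comm] at this
          exact he1.add heven
        have hRle2 : egR d k ≤ egR d' k + 2 := by
          rw [egR, egR, add_assoc]
          apply Nat.add_le_add_left
          calc ∑ i ∈ univ.filter (fun i : Fin n => k < (i : ℕ)), min (k + 1) (d i)
              ≤ ∑ i ∈ univ.filter (fun i : Fin n => k < (i : ℕ)),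
                (min (k + 1) (d' i) + if i = s ∨ i = t then 1 else 0) :=
                Finset.sum_le_sum (fun i _ => hptm (k+1) i)
            _ = (∑ i ∈ univ.filter (fun i : Fin n => k < (i : ℕ)), min (k + 1) (d' i)) + 2 := by
                rw [Finset.sum_add_distrib, hind]
                have hs : s ∈ univ.filter (fun i : Fin n => k < (i : ℕ)) := by
                  simp only [mem_filter, mem_univ, true_and]; omega
                have ht : t ∈ univ.filter (fun i : Fin n => k < (i : ℕ)) := by
                  simp only [mem_filter, mem_univ, true_and]; omega
                rw [if_pos hs, if_pos ht]
        obtain ⟨mm, hmm⟩ := hpar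
        omega
      · -- c ≥ k + 2
        push_neg at hcK
        by_cases hdtK : k + 2 ≤ d t
        · -- Case 3a : no mins drop
          have hR : egR d k = egR d' k := by
            rw [egR, egR]
            congr 1
            apply Finset.sum_congr rfl
            intro i _
            rw [hd' i]
            split_ifs with h
            · rcases h with rfl | rfl
              · omega
              · omega
            · rfl
          have := hEG k hk
          omega
        · -- Case 3c : only the min at t drops; use EG at k+1
          push_neg at hdtK
          set M := univ.filter (fun i : Fin n => k + 2 ≤ d i) with hM
          have hsM : s ∈ M := by
            simp only [hM, mem_filter, mem_univ, true_and]; omega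
          set m := M.max' ⟨s, hsM⟩ with hm
          have hdm : k + 2 ≤ d m := by
            have := M.max'_mem ⟨s, hsM⟩
            simp only [hM, mem_filter, mem_univ, true_and] at this
            exact this
          have hsm : (s : ℕ) ≤ (m : ℕ) := M.le_max' s hsM
          have hmax : ∀ i : Fin n, (m : ℕ) < (i : ℕ) → d i ≤ k + 1 := by
            intro i hi
            by_contra hcon
            push_neg at hcon
            have : i ∈ M := by
              simp only [hM, mem_filter, mem_univ, true_and]; omega
            have := M.le_max' i this
            omega
          have hmt : (m : ℕ) < (t : ℕ) := by
            have h1 : ¬ ((t : ℕ) < (m : ℕ)) := fun hcon => by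
              have := hzero m hcon; omega
            have h2 : m ≠ t := fun hcon => by rw [hcon] at hdm; omega
            have h3 : (m : ℕ) ≠ (t : ℕ) := fun hcon => h2 (Fin.ext hcon)
            omega
          have hk1n : k + 1 < n := by
            have := t.isLt
            omega
          obtain ⟨b, hbm⟩ : ∃ b, (m : ℕ) = k + 1 + b := ⟨(m : ℕ) - k - 1, by omega⟩
          have hdge : ∀ i : Fin n, (i : ℕ) ≤ (m : ℕ) → k + 2 ≤ d i := by
            intro i hi
            have : d m ≤ d i := hmono (by rwa [Fin.le_def])
            omega
          have hmid : ∑ i ∈ univ.filter (fun i : Fin n => k < (i : ℕ) ∧ (i : ℕ) ≤ (m : ℕ)),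
              min (k+1) (d i) = (b+1) * (k+1) := by
            rw [Finset.sum_congr rfl (fun i hi => (by
              simp only [mem_filter, mem_univ, true_and] at hi
              have := hdge i hi.2
              omega : min (k+1) (d i) = k+1)),
              Finset.sum_const, card_filter_Ioc_eq n k (m : ℕ) m.isLt, smul_eq_mul]
            congr 1
            omega
          have htaileq : ∑ i ∈ univ.filter (fun i : Fin n => (m : ℕ) < (i : ℕ)),
              min (k+1) (d i) = ∑ i ∈ univ.filter (fun i : Fin n => (m : ℕ) < (i : ℕ)), d i := by
            apply Finset.sum_congr rfl
            intro i hi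
            simp only [mem_filter, mem_univ, true_and] at hi
            have := hmax i hi
            omega
          have hRk : egR d k = (k+1) * k +
              ((b+1) * (k+1) + ∑ i ∈ univ.filter (fun i : Fin n => (m : ℕ) < (i : ℕ)), d i) := by
            rw [egR, sum_split_gt (fun i => min (k+1) (d i)) k (m : ℕ) (by omega), hmid, htaileq]
          have hmid2 : ∑ i ∈ univ.filter
              (fun i : Fin n => k + 1 < (i : ℕ) ∧ (i : ℕ) ≤ (m : ℕ)),
              min (k+1+1) (d i) = b * (k+2) := by
            rw [Finset.sum_congr rfl (fun i hi => (by
              simp only [mem_filter, mem_univ, true_and] at hi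
              have := hdge i hi.2
              omega : min (k+1+1) (d i) = k+2)),
              Finset.sum_const, card_filter_Ioc_eq n (k+1) (m : ℕ) m.isLt, smul_eq_mul]
            congr 1
            omega
          have htaileq2 : ∑ i ∈ univ.filter (fun i : Fin n => (m : ℕ) < (i : ℕ)),
              min (k+1+1) (d i) = ∑ i ∈ univ.filter (fun i : Fin n => (m : ℕ) < (i : ℕ)), d i := by
            apply Finset.sum_congr rfl
            intro i hi
            simp only [mem_filter, mem_univ, true_and] at hi
            have := hmax i hi
            omega
          have hRk1 : egR d (k+1) = (k+2) * (k+1) +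
              (b * (k+2) + ∑ i ∈ univ.filter (fun i : Fin n => (m : ℕ) < (i : ℕ)), d i) := by
            rw [egR, sum_split_gt (fun i => min (k+1+1) (d i)) (k+1) (m : ℕ) (by omega),
              hmid2, htaileq2]
          have hLk1 : egL d (k+1) = (k+1) * c + c := by
            rw [egL_succ d k hk1n, hLkc, hconst ⟨k+1, hk1n⟩ (by
              simp only []
              omega)]
          have htail1 : 1 ≤ ∑ i ∈ univ.filter (fun i : Fin n => (m : ℕ) < (i : ℕ)), d i := by
            have ht : t ∈ univ.filter (fun i : Fin n => (m : ℕ) < (i : ℕ)) := by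
              simp only [mem_filter, mem_univ, true_and]; omega
            calc 1 ≤ d t := hdt1
              _ ≤ _ := Finset.single_le_sum (fun i _ => Nat.zero_le (d i)) ht
          have hEG1 := hEG (k+1) hk1n
          rw [hLk1, hRk1] at hEG1
          have hRle : egR d k ≤ egR d' k + 1 := by
            rw [egR, egR, add_assoc]
            apply Nat.add_le_add_left
            calc ∑ i ∈ univ.filter (fun i : Fin n => k < (i : ℕ)), min (k + 1) (d i)
                ≤ ∑ i ∈ univ.filter (fun i : Fin n => k < (i : ℕ)),
                  (min (k + 1) (d' i) + if i = t then 1 else 0) := by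
                  apply Finset.sum_le_sum
                  intro i _
                  rw [hd' i]
                  by_cases h1 : i = s
                  · subst h1
                    rw [if_pos (Or.inl rfl), if_neg hsnet]
                    omega
                  · by_cases h2 : i = t
                    · subst h2
                      rw [if_pos (Or.inr rfl), if_pos rfl]
                      omega
                    · rw [if_neg (by tauto), if_neg h2]
                      omega
              _ = (∑ i ∈ univ.filter (fun i : Fin n => k < (i : ℕ)), min (k + 1) (d' i)) + 1 := by
                  rw [Finset.sum_add_distrib,
                    Finset.sum_ite_eq' (univ.filter (fun i : Fin n => k < (i : ℕ))) t
                      (fun _ => (1:ℕ))]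
                  have ht : t ∈ univ.filter (fun i : Fin n => k < (i : ℕ)) := by
                    simp only [mem_filter, mem_univ, true_and]; omega
                  rw [if_pos ht]
          -- final arithmetic
          rw [← hL0, hLkc]
          have hkey : (k+1) * c + 1 ≤ egR d k := by
            rw [hRk]
            by_cases hcmv : (m : ℕ) + 1 ≤ c
            · have hId : (k+2) * (k+1) + b * (k+2) = (k+1) * k + (b+1) * (k+1) + (k+b+1) := by
                ring
              have hc' : k + b + 2 ≤ c := by omega
              linarith [hEG1]
            · push_neg at hcmv
              have hmm1 : (k+1) * c ≤ (k+1) * (k+1+b) := Nat.mul_le_mul le_rfl (by omega)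
              have hId2 : (k+1) * (k+1+b) = (k+1) * k + (b+1) * (k+1) := by ring
              linarith [htail1]
          omega

lemma construct {n : ℕ} (d d' : Fin n → ℕ) (s t : Fin n)
    (hst : (s : ℕ) < (t : ℕ))
    (hd' : ∀ i, d' i = if i = s ∨ i = t then d i - 1 else d i)
    (hds1 : 1 ≤ d s) (hdt1 : 1 ≤ d t)
    (hmono : Antitone d)
    (hct : d s ≤ (t : ℕ))
    (hpos : ∀ i : Fin n, (i : ℕ) ≤ (t : ℕ) → 1 ≤ d i)
    (G' : SimpleGraph (Fin n)) (hG' : ∀ i, deg G' i = d' i) :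
    ∃ G : SimpleGraph (Fin n), ∀ i, deg G i = d i := by
  have hsnet : s ≠ t := fun h => by rw [h] at hst; omega
  have htnes : t ≠ s := Ne.symm hsnet
  have hcard' : ∀ i, (univ.filter (G'.Adj i)).card = d' i := by
    intro i; rw [← deg_eq_card, hG']
  by_cases hadj : G'.Adj s t
  · -- s ~ t in G' : find a 2-switch
    have hu : ∃ u : Fin n, (u : ℕ) ≤ (t : ℕ) ∧ u ≠ s ∧ ¬ G'.Adj s u := by
      by_contra hcon
      push_neg at hcon
      have hsub : (univ.filter fun i : Fin n => (i : ℕ) ≤ (t : ℕ)) ⊆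
          insert s (univ.filter (G'.Adj s)) := by
        intro i hi
        simp only [mem_filter, mem_univ, true_and] at hi
        by_cases his : i = s
        · simp [his]
        · simp only [mem_insert, mem_filter, mem_univ, true_and]
          exact Or.inr (hcon i hi his)
      have h1 : (univ.filter fun i : Fin n => (i : ℕ) ≤ (t : ℕ)).card = (t : ℕ) + 1 :=
        card_filter_le_eq n _ t.isLt
      have h2 : (insert s (univ.filter (G'.Adj s))).card ≤ 1 + (d s - 1) := by
        calc (insert s (univ.filter (G'.Adj s))).card ≤ (univ.filter (G'.Adj s)).card + 1 :=
              Finset.card_insert_le _ _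
          _ = 1 + (d s - 1) := by rw [hcard' s, hd' s]; simp [hsnet]; omega
      have := Finset.card_le_card hsub
      omega
    obtain ⟨u, hut, hus, hsu⟩ := hu
    have hsneu : s ≠ u := Ne.symm hus
    have hunet : u ≠ t := fun h => hsu (h ▸ hadj)
    have htneu : t ≠ u := Ne.symm hunet
    have hus' : ¬ G'.Adj u s := fun h => hsu h.symm
    have hdu : (univ.filter (G'.Adj u)).card = d u := by
      rw [hcard' u, hd' u, if_neg (by rintro (h | h); exacts [hus h, hunet h])]
    have hdut : d t ≤ d u := hmono (by rwa [Fin.le_def])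
    have hv : ∃ v : Fin n, G'.Adj u v ∧ v ≠ t ∧ ¬ G'.Adj t v := by
      by_contra hcon
      push_neg at hcon
      have hsub : (univ.filter (G'.Adj u)) ⊆ insert t (univ.filter (G'.Adj t)) := by
        intro x hx
        simp only [mem_filter, mem_univ, true_and] at hx
        by_cases hxt : x = t
        · simp [hxt]
        · simp only [mem_insert, mem_filter, mem_univ, true_and]
          exact Or.inr (hcon x hx hxt)
      have hdt' : (univ.filter (G'.Adj t)).card = d t - 1 := by
        rw [hcard' t, hd' t, if_pos (Or.inr rfl)]
      have hcardins : (insert t (univ.filter (G'.Adj t))).card = d t := by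
        rw [Finset.card_insert_of_notMem (by simp [G'.loopless.irrefl t]), hdt']
        omega
      have heq : (univ.filter (G'.Adj u)) = insert t (univ.filter (G'.Adj t)) := by
        apply Finset.eq_of_subset_of_card_le hsub
        rw [hcardins, hdu]
        exact hdut
      have hsmem : s ∈ (univ.filter (G'.Adj u)) := by
        rw [heq]
        simp only [mem_insert, mem_filter, mem_univ, true_and]
        exact Or.inr hadj.symm
      simp only [mem_filter, mem_univ, true_and] at hsmem
      exact hsu hsmem.symm
    obtain ⟨v, huv, hvt, htv⟩ := hv
    have htnev : t ≠ v := Ne.symm hvt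
    have hvs : v ≠ s := fun h => hsu (h ▸ huv).symm
    have hsnev : s ≠ v := Ne.symm hvs
    have hvu : v ≠ u := fun h => G'.loopless.irrefl u (h ▸ huv)
    have hunev : u ≠ v := Ne.symm hvu
    have hvu' : G'.Adj v u := huv.symm
    have htv' : ¬ G'.Adj v t := fun h => htv h.symm
    set A : Fin n → Fin n → Prop := fun a b =>
      (G'.Adj a b ∧ ¬((a = u ∧ b = v) ∨ (a = v ∧ b = u))) ∨
      ((a = s ∧ b = u) ∨ (a = u ∧ b = s)) ∨
      ((a = t ∧ b = v) ∨ (a = v ∧ b = t)) with hA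
    have hsymm : Symmetric A := by
      intro a b h
      simp only [hA] at h ⊢
      rcases h with ⟨h1, h2⟩ | (⟨ha, hb⟩ | ⟨ha, hb⟩) | (⟨ha, hb⟩ | ⟨ha, hb⟩)
      · refine Or.inl ⟨h1.symm, ?_⟩
        rintro (⟨hb1, ha1⟩ | ⟨hb1, ha1⟩)
        · exact h2 (Or.inr ⟨ha1, hb1⟩)
        · exact h2 (Or.inl ⟨ha1, hb1⟩)
      · exact Or.inr (Or.inl (Or.inr ⟨hb, ha⟩))
      · exact Or.inr (Or.inl (Or.inl ⟨hb, ha⟩))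
      · exact Or.inr (Or.inr (Or.inr ⟨hb, ha⟩))
      · exact Or.inr (Or.inr (Or.inl ⟨hb, ha⟩))
    have hloop : Irreflexive A := by
      intro a h
      simp only [hA] at h
      rcases h with ⟨h1, -⟩ | (⟨h1, h2⟩ | ⟨h1, h2⟩) | (⟨h1, h2⟩ | ⟨h1, h2⟩)
      · exact G'.loopless.irrefl a h1
      · exact hus (h2.symm.trans h1)
      · exact hus (h1.symm.trans h2)
      · exact hvt (h2.symm.trans h1)
      · exact hvt (h1.symm.trans h2)
    refine ⟨⟨A, ⟨fun a b h => hsymm h⟩, ⟨hloop⟩⟩, ?_⟩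
    intro w
    by_cases hws : w = s
    · subst hws
      rw [deg_eq_of_iff _ w (insert u (univ.filter (G'.Adj w)))
        (fun b => by
          show A w b ↔ _
          simp only [hA, mem_insert, mem_filter, mem_univ, true_and]
          constructor
          · rintro (⟨h1, -⟩ | (hb | ⟨ha, -⟩) | (⟨ha, -⟩ | ⟨ha, -⟩))
            exacts [Or.inr h1, Or.inl hb, absurd ha hsneu, absurd ha hsnet, absurd ha hsnev]
          · rintro (rfl | h)
            · exact Or.inr (Or.inl (Or.inl rfl))
            · refine Or.inl ⟨h, ?_⟩
              rintro (⟨ha, -⟩ | ⟨ha, -⟩)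
              exacts [hsneu ha, hsnev ha])]
      rw [Finset.card_insert_of_notMem (by simp [hsu]), hcard' w, hd' w, if_pos (Or.inl rfl)]
      omega
    · by_cases hwt : w = t
      · subst hwt
        rw [deg_eq_of_iff _ w (insert v (univ.filter (G'.Adj w)))
          (fun b => by
            show A w b ↔ _
            simp only [hA, mem_insert, mem_filter, mem_univ, true_and]
            constructor
            · rintro (⟨h1, -⟩ | (⟨ha, -⟩ | ⟨ha, -⟩) | (hb | ⟨ha, -⟩))
              exacts [Or.inr h1, absurd ha htnes, absurd ha htneu, Or.inl hb, absurd ha htnev]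
            · rintro (rfl | h)
              · exact Or.inr (Or.inr (Or.inl rfl))
              · refine Or.inl ⟨h, ?_⟩
                rintro (⟨ha, -⟩ | ⟨ha, -⟩)
                exacts [htneu ha, htnev ha])]
        rw [Finset.card_insert_of_notMem (by simp [htv]), hcard' w, hd' w, if_pos (Or.inr rfl)]
        omega
      · by_cases hwu : w = u
        · subst hwu
          rw [deg_eq_of_iff _ w (insert s ((univ.filter (G'.Adj w)).erase v))
            (fun b => by
              show A w b ↔ _
              simp only [hA, mem_insert, mem_erase, mem_filter, mem_univ, true_and]
              constructor
              · rintro (⟨h1, h2⟩ | (⟨ha, -⟩ | hb) | (⟨ha, -⟩ | ⟨ha, -⟩))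
                · exact Or.inr ⟨fun hbv => h2 (Or.inl hbv), h1⟩
                · exact absurd ha hus
                · exact Or.inl hb
                · exact absurd ha hunet
                · exact absurd ha hunev
              · rintro (rfl | ⟨hbv, h⟩)
                · exact Or.inr (Or.inl (Or.inr rfl))
                · refine Or.inl ⟨h, ?_⟩
                  rintro (hb | ⟨ha, -⟩)
                  exacts [hbv hb, hunev ha])]
          rw [Finset.card_insert_of_notMem
              (by simp only [mem_erase, mem_filter, mem_univ, true_and]
                  rintro ⟨-, h⟩
                  exact hus' h),
            Finset.card_erase_of_mem (by simp [huv]), hdu]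
          have h1 : 1 ≤ d w := by
            rw [← hdu]
            exact Finset.card_pos.mpr ⟨v, by simp [huv]⟩
          omega
        · by_cases hwv : w = v
          · subst hwv
            have hdv : (univ.filter (G'.Adj w)).card = d w := by
              rw [hcard' w, hd' w, if_neg (by rintro (h | h); exacts [hvs h, hvt h])]
            rw [deg_eq_of_iff _ w (insert t ((univ.filter (G'.Adj w)).erase u))
              (fun b => by
                show A w b ↔ _
                simp only [hA, mem_insert, mem_erase, mem_filter, mem_univ, true_and]
                constructor
                · rintro (⟨h1, h2⟩ | (⟨ha, -⟩ | ⟨ha, -⟩) | (⟨ha, -⟩ | hb))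
                  · exact Or.inr ⟨fun hbu => h2 (Or.inr hbu), h1⟩
                  · exact absurd ha hvs
                  · exact absurd ha hvu
                  · exact absurd ha hvt
                  · exact Or.inl hb
                · rintro (rfl | ⟨hbu, h⟩)
                  · exact Or.inr (Or.inr (Or.inr rfl))
                  · refine Or.inl ⟨h, ?_⟩
                    rintro (⟨ha, -⟩ | hb)
                    exacts [hvu ha, hbu hb])]
            have h1 : 1 ≤ d w := by
              rw [← hdv]
              exact Finset.card_pos.mpr ⟨u, by simp [hvu']⟩
            rw [Finset.card_insert_of_notMem
                (by simp only [mem_erase, mem_filter, mem_univ, true_and]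
                    rintro ⟨-, h⟩
                    exact htv' h),
              Finset.card_erase_of_mem (by simp [hvu']), hdv]
            omega
          · rw [deg_eq_of_iff _ w (univ.filter (G'.Adj w))
              (fun b => by
                show A w b ↔ _
                simp only [hA, mem_filter, mem_univ, true_and]
                constructor
                · rintro (⟨h1, -⟩ | (⟨ha, -⟩ | ⟨ha, -⟩) | (⟨ha, -⟩ | ⟨ha, -⟩))
                  exacts [h1, absurd ha hws, absurd ha hwu, absurd ha hwt, absurd ha hwv]
                · intro h
                  refine Or.inl ⟨h, ?_⟩
                  rintro (⟨ha, -⟩ | ⟨ha, -⟩)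
                  exacts [hwu ha, hwv ha])]
            rw [hcard' w, hd' w, if_neg (by rintro (h | h); exacts [hws h, hwt h])]
  · -- just add the edge s t
    set A : Fin n → Fin n → Prop := fun a b =>
      G'.Adj a b ∨ (a = s ∧ b = t) ∨ (a = t ∧ b = s) with hA
    have hsymm : Symmetric A := by
      intro a b h
      simp only [hA] at h ⊢
      rcases h with h | ⟨ha, hb⟩ | ⟨ha, hb⟩
      · exact Or.inl h.symm
      · exact Or.inr (Or.inr ⟨hb, ha⟩)
      · exact Or.inr (Or.inl ⟨hb, ha⟩)
    have hloop : Irreflexive A := by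
      intro a h
      simp only [hA] at h
      rcases h with h | ⟨h1, h2⟩ | ⟨h1, h2⟩
      · exact G'.loopless.irrefl a h
      · exact hsnet (h1.symm.trans h2)
      · exact hsnet (h2.symm.trans h1)
    have hadj' : ¬ G'.Adj t s := fun h => hadj h.symm
    refine ⟨⟨A, ⟨fun a b h => hsymm h⟩, ⟨hloop⟩⟩, ?_⟩
    intro w
    by_cases hws : w = s
    · subst hws
      rw [deg_eq_of_iff _ w (insert t (univ.filter (G'.Adj w)))
        (fun b => by
          show A w b ↔ _
          simp only [hA, mem_insert, mem_filter, mem_univ, true_and]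
          constructor
          · rintro (h | hb | ⟨ha, -⟩)
            exacts [Or.inr h, Or.inl hb, absurd ha hsnet]
          · rintro (rfl | h)
            · exact Or.inr (Or.inl rfl)
            · exact Or.inl h)]
      rw [Finset.card_insert_of_notMem (by simp [hadj]), hcard' w, hd' w, if_pos (Or.inl rfl)]
      omega
    · by_cases hwt : w = t
      · subst hwt
        rw [deg_eq_of_iff _ w (insert s (univ.filter (G'.Adj w)))
          (fun b => by
            show A w b ↔ _
            simp only [hA, mem_insert, mem_filter, mem_univ, true_and]
            constructor
            · rintro (h | ⟨ha, -⟩ | hb)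
              exacts [Or.inr h, absurd ha htnes, Or.inl hb]
            · rintro (rfl | h)
              · exact Or.inr (Or.inr rfl)
              · exact Or.inl h)]
        rw [Finset.card_insert_of_notMem (by simp [hadj']), hcard' w, hd' w, if_pos (Or.inr rfl)]
        omega
      · rw [deg_eq_of_iff _ w (univ.filter (G'.Adj w))
          (fun b => by
            show A w b ↔ _
            simp only [hA, mem_filter, mem_univ, true_and]
            constructor
            · rintro (h | ⟨ha, -⟩ | ⟨ha, -⟩)
              exacts [h, absurd ha hws, absurd ha hwt]
            · exact fun h => Or.inl h)]
        rw [hcard' w, hd' w, if_neg (by rintro (h | h); exacts [hws h, hwt h])]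

lemma eg_graphic {n : ℕ} : ∀ (N : ℕ) (d : Fin n → ℕ), ∑ i, d i = N → Antitone d →
    Even N → (∀ k, k < n → egL d k ≤ egR d k) →
    ∃ G : SimpleGraph (Fin n), ∀ i, deg G i = d i := by
  intro N
  induction N using Nat.strong_induction_on with
  | _ N ih =>
  intro d hsum hmono heven hEG
  rcases Nat.eq_zero_or_pos N with rfl | hNpos
  · -- all degrees zero
    have hall : ∀ i ∈ (univ : Finset (Fin n)), d i = 0 :=
      (Finset.sum_eq_zero_iff).mp hsum
    refine ⟨⊥, fun i => ?_⟩
    have hempty : (⊥ : SimpleGraph (Fin n)).neighborSet i = ∅ := by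
      ext w; simp
    rw [deg, hempty, Set.ncard_empty, hall i (mem_univ i)]
  · have hn : 0 < n := by
      rcases Nat.eq_zero_or_pos n with rfl | h
      · rw [Finset.univ_eq_empty, Finset.sum_empty] at hsum; omega
      · exact h
    set v0 : Fin n := ⟨0, hn⟩ with hv0
    set c := d v0 with hc
    have hcmax : ∀ i : Fin n, d i ≤ c := fun i => hmono (by rw [Fin.le_def]; exact Nat.zero_le _)
    have hex : ∃ i, 0 < d i := by
      by_contra hcon
      push_neg at hcon
      have : ∑ i, d i = 0 := Finset.sum_eq_zero (fun i _ => by have := hcon i; omega)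
      omega
    obtain ⟨i0, hi0⟩ := hex
    have hc1 : 1 ≤ c := le_trans hi0 (hcmax i0)
    -- t : last positive entry
    have hTne : (univ.filter (fun i : Fin n => 0 < d i)).Nonempty :=
      ⟨i0, by simp only [mem_filter, mem_univ, true_and]; exact hi0⟩
    set t := (univ.filter (fun i : Fin n => 0 < d i)).max' hTne with ht
    have hdt1 : 1 ≤ d t := by
      have := Finset.max'_mem _ hTne
      simp only [mem_filter, mem_univ, true_and] at this
      rw [ht]; exact this
    have hzero : ∀ i : Fin n, (t : ℕ) < (i : ℕ) → d i = 0 := by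
      intro i hi
      by_contra hcon
      have hmem : i ∈ univ.filter (fun i : Fin n => 0 < d i) := by
        simp only [mem_filter, mem_univ, true_and]; omega
      have := Finset.le_max' _ i hmem
      rw [← ht] at this
      rw [Fin.le_def] at this
      omega
    have hpos : ∀ i : Fin n, (i : ℕ) ≤ (t : ℕ) → 1 ≤ d i := by
      intro i hi
      calc 1 ≤ d t := hdt1
        _ ≤ d i := hmono (by rwa [Fin.le_def])
    -- EG at 0 gives c ≤ t
    have hct : c ≤ (t : ℕ) := by
      have h0 := hEG 0 hn
      have hL : egL d 0 = c := by
        rw [egL, filter_le_zero_eq hn, Finset.sum_singleton]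
      have hmid : ∑ i ∈ univ.filter (fun i : Fin n => 0 < (i : ℕ) ∧ (i : ℕ) ≤ (t : ℕ)),
          min (0+1) (d i) = (t : ℕ) := by
        rw [Finset.sum_congr rfl (fun i hi => (by
          simp only [mem_filter, mem_univ, true_and] at hi
          have := hpos i hi.2
          omega : min (0+1) (d i) = 1)), Finset.sum_const,
          card_filter_Ioc_eq n 0 (t : ℕ) t.isLt, smul_eq_mul]
        omega
      have htail : ∑ i ∈ univ.filter (fun i : Fin n => (t : ℕ) < (i : ℕ)),
          min (0+1) (d i) = 0 := by
        apply Finset.sum_eq_zero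
        intro i hi
        simp only [mem_filter, mem_univ, true_and] at hi
        have := hzero i hi
        omega
      have hR : egR d 0 = (t : ℕ) := by
        rw [egR, sum_split_gt (fun i => min (0+1) (d i)) 0 (t : ℕ) (Nat.zero_le _),
          hmid, htail]
        omega
      omega
    have htv1 : 1 ≤ (t : ℕ) := le_trans hc1 hct
    -- s : last index of the first block before t
    have hv00 : (v0 : ℕ) = 0 := rfl
    have hSne : v0 ∈ univ.filter (fun i : Fin n => (i : ℕ) < (t : ℕ) ∧ d i = c) := by
      simp only [mem_filter, mem_univ, true_and]
      exact ⟨by omega, hc.symm⟩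
    set s := (univ.filter (fun i : Fin n => (i : ℕ) < (t : ℕ) ∧ d i = c)).max' ⟨v0, hSne⟩
      with hs
    have hsmem := Finset.max'_mem _ (⟨v0, hSne⟩ : (univ.filter
      (fun i : Fin n => (i : ℕ) < (t : ℕ) ∧ d i = c)).Nonempty)
    rw [← hs] at hsmem
    simp only [mem_filter, mem_univ, true_and] at hsmem
    obtain ⟨hst, hds⟩ := hsmem
    have hsnet : s ≠ t := fun h => by rw [h] at hst; omega
    have hds1 : 1 ≤ d s := by rw [hds]; exact hc1
    have hconst : ∀ i : Fin n, (i : ℕ) ≤ (s : ℕ) → d i = c := by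
      intro i hi
      have h1 : d i ≤ c := hcmax i
      have h2 : d s ≤ d i := hmono (by rwa [Fin.le_def])
      omega
    have hsmax : ∀ i : Fin n, (s : ℕ) < (i : ℕ) → (i : ℕ) < (t : ℕ) → d i ≠ c := by
      intro i h1 h2 hcon
      have hmem : i ∈ univ.filter (fun i : Fin n => (i : ℕ) < (t : ℕ) ∧ d i = c) := by
        simp only [mem_filter, mem_univ, true_and]; exact ⟨h2, hcon⟩
      have := Finset.le_max' _ i hmem
      rw [← hs, Fin.le_def] at this
      omega
    -- the reduced sequence
    set d' : Fin n → ℕ := fun i => if i = s ∨ i = t then d i - 1 else d i with hd'def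
    have hd' : ∀ i, d' i = if i = s ∨ i = t then d i - 1 else d i := fun i => rfl
    have hd's : d' s = d s - 1 := by rw [hd' s, if_pos (Or.inl rfl)]
    have hd't : d' t = d t - 1 := by rw [hd' t, if_pos (Or.inr rfl)]
    have hd'o : ∀ i, i ≠ s → i ≠ t → d' i = d i := by
      intro i h1 h2; rw [hd' i, if_neg (by tauto)]
    -- sum of d'
    have hsum' : (∑ i, d' i) + 2 = N := by
      have hpt : ∀ i : Fin n, d i = d' i + (if i = s then 1 else 0) + (if i = t then 1 else 0) := by
        intro i
        by_cases h1 : i = s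
        · subst h1
          rw [if_pos rfl, if_neg hsnet, hd's]
          omega
        · by_cases h2 : i = t
          · subst h2
            rw [if_neg h1, if_pos rfl, hd't]
            omega
          · rw [if_neg h1, if_neg h2, hd'o i h1 h2]
            omega
      rw [← hsum, Finset.sum_congr rfl (fun i _ => hpt i), Finset.sum_add_distrib,
        Finset.sum_add_distrib, Finset.sum_ite_eq' univ s (fun _ => (1:ℕ)),
        Finset.sum_ite_eq' univ t (fun _ => (1:ℕ)), if_pos (mem_univ s), if_pos (mem_univ t)]
    -- d' is antitone
    have hmono' : Antitone d' := by
      intro i j hij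
      have hvij : (i : ℕ) ≤ (j : ℕ) := hij
      have hdd : d j ≤ d i := hmono hij
      by_cases hjs : j = s
      · subst hjs
        by_cases his : i = s
        · subst his; exact le_rfl
        · have hit : i ≠ t := by
            intro h; subst h; omega
          rw [hd'o i his hit, hd's]
          have : d s ≤ d i := hmono hij
          omega
      · by_cases hjt : j = t
        · subst hjt
          by_cases his : i = s
          · subst his
            rw [hd's, hd't, hds]
            have := hcmax t
            omega
          · by_cases hit : i = t
            · subst hit; exact le_rfl
            · rw [hd'o i his hit, hd't]
              omega
        · -- j ∉ {s, t}
          rw [hd'o j hjs hjt]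
          by_cases his : i = s
          · subst his
            rw [hd's, hds]
            have hvj : (s : ℕ) < (j : ℕ) := by
              rcases Nat.lt_or_ge (s : ℕ) (j : ℕ) with h | h
              · exact h
              · exfalso; apply hjs; apply Fin.ext; omega
            rcases Nat.lt_trichotomy (j : ℕ) (t : ℕ) with h | h | h
            · have := hsmax j hvj h
              have := hcmax j
              omega
            · exact absurd (Fin.ext h) hjt
            · have := hzero j h
              omega
          · by_cases hit : i = t
            · subst hit
              have hvj : (t : ℕ) < (j : ℕ) := by
                rcases Nat.lt_or_ge (t : ℕ) (j : ℕ) with h | h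
                · exact h
                · exfalso; apply hjt; apply Fin.ext; omega
              have := hzero j hvj
              rw [hd't]
              omega
            · rw [hd'o i his hit]
              exact hdd
    -- parity and induction
    have hN2 : 2 ≤ N := by
      obtain ⟨r, hr⟩ := heven
      omega
    have heven' : Even (N - 2) := by
      obtain ⟨r, hr⟩ := heven
      exact ⟨r - 1, by omega⟩
    have hevend : Even (∑ i, d i) := by rw [hsum]; exact heven
    have hEG' := reduce_EG d d' hmono hevend hEG s t c hst hconst hcmax hpos hzero hd'
    obtain ⟨G', hG'⟩ := ih (N - 2) (by omega) d' (by omega) hmono' heven' hEG'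
    exact construct d d' s t hst hd' hds1 hdt1 hmono (hds ▸ hct) hpos G' hG'


/-- Erdős–Gallai theorem (with the Hammer–Ibaraki–Simeone simplification):
a nonincreasing list `d` of nonnegative integers with even sum is graphic iff the
Erdős–Gallai inequality holds for all `k ∈ {1, …, m(d)}`, where
`m(d) = max {i : dᵢ ≥ i - 1}`.  Here `k : Fin n` is the `0`-indexed version of the
`1`-indexed `k + 1`, and since `d` is nonincreasing, `k + 1 ≤ m(d)` is equivalent to
`d k ≥ k` (`0`-indexed). -/
theorem stmt1 (n : ℕ) (d : Fin n → ℕ) (hmono : Antitone d)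
    (heven : Even (∑ i, d i)) :
    (∃ G : SimpleGraph (Fin n), ∀ i, deg G i = d i) ↔
      ∀ k : Fin n, (k : ℕ) ≤ d k →
        ∑ i ∈ Finset.univ.filter (fun i : Fin n => (i : ℕ) ≤ (k : ℕ)), d i ≤
          ((k : ℕ) + 1) * (k : ℕ) +
            ∑ i ∈ Finset.univ.filter (fun i : Fin n => (k : ℕ) < (i : ℕ)),
              min ((k : ℕ) + 1) (d i) := by
  constructor
  · rintro ⟨G, hG⟩ k _
    exact forward d G hG (k : ℕ) k.isLt
  · intro hEG
    apply eg_graphic (∑ i, d i) d rfl hmono heven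
    apply his_extend d
    intro k hk
    exact hEG k hk
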